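/- For a real number x with 0 ≤ x < 1 and nonnegative integers k, k', the sum over n ≥ max(k,k') of n!·xⁿ/((n−k)!·(n−k')!) equals e^x · Σ_{i=0}^{min(k,k')} k!·k'!·x^{k+k'−i} / (i!·(k−i)!·(k'−i)!). -/

import Mathlib

open Finset

lemma core_sum (x : ℝ) (k k' n : ℕ) (h : k ≤ k') :
    ∑ j ∈ range (n + 1),
      (if j ≤ k then
        ((k.factorial : ℝ) * k'.factorial) * x ^ (j + k') /
          (((k - j).factorial : ℝ) * (j.factorial : ℝ) * ((k' - k + j).factorial : ℝ))
      else 0) * (x ^ (n - j) / ((n - j).factorial : ℝ)) =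
    ((n + k').factorial : ℝ) * x ^ (n + k') /
      (((n + k' - k).factorial : ℝ) * (n.factorial : ℝ)) := by
  have h1 : ∑ j ∈ range (n + 1),
      (if j ≤ k then
        ((k.factorial : ℝ) * k'.factorial) * x ^ (j + k') /
          (((k - j).factorial : ℝ) * (j.factorial : ℝ) * ((k' - k + j).factorial : ℝ))
      else 0) * (x ^ (n - j) / ((n - j).factorial : ℝ)) =
      ∑ j ∈ range (min n k + 1),
      (if j ≤ k then
        ((k.factorial : ℝ) * k'.factorial) * x ^ (j + k') /
          (((k - j).factorial : ℝ) * (j.factorial : ℝ) * ((k' - k + j).factorial : ℝ))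
      else 0) * (x ^ (n - j) / ((n - j).factorial : ℝ)) := by
    refine (Finset.sum_subset (Finset.range_subset_range.mpr (by omega)) ?_).symm
    intro j hj hj'
    simp only [Finset.mem_range] at hj hj'
    rw [if_neg (by omega), zero_mul]
  rw [h1]
  -- Vandermonde
  have hV : ((n + k').choose k : ℝ) =
      ∑ j ∈ range (min n k + 1), (n.choose j : ℝ) * (k'.choose (k - j) : ℝ) := by
    have := Nat.add_choose_eq n k' k
    rw [Finset.Nat.sum_antidiagonal_eq_sum_range_succ_mk] at this
    have h2 : ∑ j ∈ range (k + 1), n.choose j * k'.choose (k - j) =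
        ∑ j ∈ range (min n k + 1), n.choose j * k'.choose (k - j) := by
      refine (Finset.sum_subset (Finset.range_subset_range.mpr (by omega)) ?_).symm
      intro j hj hj'
      simp only [Finset.mem_range] at hj hj'
      rw [Nat.choose_eq_zero_of_lt (by omega), zero_mul]
    rw [h2] at this
    exact_mod_cast congrArg (Nat.cast : ℕ → ℝ) this
  have h3 : ∑ j ∈ range (min n k + 1),
      (if j ≤ k then
        ((k.factorial : ℝ) * k'.factorial) * x ^ (j + k') /
          (((k - j).factorial : ℝ) * (j.factorial : ℝ) * ((k' - k + j).factorial : ℝ))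
      else 0) * (x ^ (n - j) / ((n - j).factorial : ℝ)) =
      ∑ j ∈ range (min n k + 1),
        (k.factorial : ℝ) / n.factorial * x ^ (n + k') *
          ((n.choose j : ℝ) * (k'.choose (k - j) : ℝ)) := by
    refine Finset.sum_congr rfl fun j hj => ?_
    simp only [Finset.mem_range] at hj
    rw [if_pos (by omega)]
    rw [Nat.cast_choose ℝ (by omega : j ≤ n), Nat.cast_choose ℝ (by omega : k - j ≤ k')]
    have e1 : k' - (k - j) = k' - k + j := by omega
    rw [e1]
    have e2 : x ^ (j + k') * x ^ (n - j) = x ^ (n + k') := by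
      rw [← pow_add]; congr 1; omega
    field_simp
    linear_combination e2
  rw [h3, ← Finset.mul_sum, ← hV, Nat.cast_choose ℝ (by omega : k ≤ n + k')]
  field_simp

lemma key (x : ℝ) (hx0 : 0 ≤ x) (k k' : ℕ) (h : k ≤ k') :
    ∑' n : ℕ, ((n + k').factorial : ℝ) * x ^ (n + k') /
      (((n + k' - k).factorial : ℝ) * ((n + k' - k').factorial : ℝ)) =
    Real.exp x * ∑ i ∈ Finset.range (k + 1),
      (k.factorial : ℝ) * (k'.factorial : ℝ) * x ^ (k + k' - i) /
        ((i.factorial : ℝ) * ((k - i).factorial : ℝ) * ((k' - i).factorial : ℝ)) := by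
  set u : ℕ → ℝ := fun j => if j ≤ k then
      ((k.factorial : ℝ) * k'.factorial) * x ^ (j + k') /
        (((k - j).factorial : ℝ) * (j.factorial : ℝ) * ((k' - k + j).factorial : ℝ))
    else 0 with hu
  set v : ℕ → ℝ := fun m => x ^ m / (m.factorial : ℝ) with hv
  have hvsum : Summable v := Real.summable_pow_div_factorial x
  have huzero : ∀ j ∉ Finset.range (k + 1), u j = 0 := by
    intro j hj
    simp only [Finset.mem_range] at hj
    simp only [hu, if_neg (by omega : ¬ j ≤ k)]
  have husum : Summable u := summable_of_ne_finset_zero huzero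
  have hupos : ∀ j, 0 ≤ u j := by
    intro j
    simp only [hu]
    split
    · positivity
    · exact le_refl 0
  have hvpos : ∀ m, 0 ≤ v m := fun m => by simp only [hv]; positivity
  have hunorm : Summable fun j => ‖u j‖ :=
    husum.congr fun j => (Real.norm_of_nonneg (hupos j)).symm
  have hvnorm : Summable fun m => ‖v m‖ :=
    hvsum.congr fun m => (Real.norm_of_nonneg (hvpos m)).symm
  have hvexp : (∑' m, v m) = Real.exp x := by
    rw [Real.exp_eq_exp_ℝ, NormedSpace.exp_eq_tsum_div]
  have huval : (∑' j, u j) = ∑ i ∈ Finset.range (k + 1),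
      (k.factorial : ℝ) * (k'.factorial : ℝ) * x ^ (k + k' - i) /
        ((i.factorial : ℝ) * ((k - i).factorial : ℝ) * ((k' - i).factorial : ℝ)) := by
    rw [tsum_eq_sum huzero, ← Finset.sum_range_reflect]
    refine Finset.sum_congr rfl fun i hi => ?_
    simp only [Finset.mem_range] at hi
    simp only [hu, Nat.add_sub_cancel]
    rw [if_pos (by omega : k - i ≤ k)]
    have e1 : k - i + k' = k + k' - i := by omega
    have e2 : k - (k - i) = i := by omega
    have e3 : k' - k + (k - i) = k' - i := by omega
    rw [e1, e2, e3]
  have cauchy := tsum_mul_tsum_eq_tsum_sum_antidiagonal_of_summable_norm hunorm hvnorm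
  rw [← huval, ← hvexp, mul_comm, cauchy]
  refine tsum_congr fun n => ?_
  rw [Finset.Nat.sum_antidiagonal_eq_sum_range_succ_mk]
  simp only [Nat.add_sub_cancel]
  exact (core_sum x k k' n h).symm

theorem stmt_0 (x : ℝ) (hx0 : 0 ≤ x) (hx1 : x < 1) (k k' : ℕ) :
    ∑' n : ℕ, ((n + max k k').factorial : ℝ) * x ^ (n + max k k') /
      (((n + max k k' - k).factorial : ℝ) * ((n + max k k' - k').factorial : ℝ)) =
    Real.exp x * ∑ i ∈ Finset.range (min k k' + 1),
      (k.factorial : ℝ) * (k'.factorial : ℝ) * x ^ (k + k' - i) /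
        ((i.factorial : ℝ) * ((k - i).factorial : ℝ) * ((k' - i).factorial : ℝ)) := by
  rcases le_total k k' with h | h
  · rw [max_eq_right h, min_eq_left h]
    exact key x hx0 k k' h
  · rw [max_eq_left h, min_eq_right h]
    have := key x hx0 k' k h
    calc ∑' n : ℕ, ((n + k).factorial : ℝ) * x ^ (n + k) /
          (((n + k - k).factorial : ℝ) * ((n + k - k').factorial : ℝ))
        = ∑' n : ℕ, ((n + k).factorial : ℝ) * x ^ (n + k) /
          (((n + k - k').factorial : ℝ) * ((n + k - k).factorial : ℝ)) := by
          exact tsum_congr fun n => by ring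
      _ = Real.exp x * ∑ i ∈ Finset.range (k' + 1),
          (k'.factorial : ℝ) * (k.factorial : ℝ) * x ^ (k' + k - i) /
            ((i.factorial : ℝ) * ((k' - i).factorial : ℝ) * ((k - i).factorial : ℝ)) := this
      _ = Real.exp x * ∑ i ∈ Finset.range (k' + 1),
          (k.factorial : ℝ) * (k'.factorial : ℝ) * x ^ (k + k' - i) /
            ((i.factorial : ℝ) * ((k - i).factorial : ℝ) * ((k' - i).factorial : ℝ)) := by
          congr 1
          refine Finset.sum_congr rfl fun i hi => ?_
          rw [add_comm k' k]
          ring
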